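/- For ρ ∈ (−1, 1) let μ_ρ be the Borel probability measure on ℝ² with density (x, y) ↦ (2π√(1−ρ²))⁻¹ exp(−(x² − 2ρxy + y²)/(2(1−ρ²))) with respect to two-dimensional Lebesgue measure (the centered bivariate Gaussian law with unit variances and correlation ρ). Then (μ_ρ ⊗ μ_ρ)({((x, y), (x′, y′)) ∈ ℝ² × ℝ² : x·x′ > 0 and y·y′ > 0}) = 1/4 + arcsin²(ρ)/π². -/

import Mathlib

open MeasureTheory

/-- The centered bivariate Gaussian measure on `ℝ²` with unit variances and correlation `ρ`,
given by its density with respect to two-dimensional Lebesgue measure. -/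
noncomputable def biGauss (ρ : ℝ) : Measure (ℝ × ℝ) :=
  (volume : Measure (ℝ × ℝ)).withDensity fun p =>
    ENNReal.ofReal ((2 * Real.pi * Real.sqrt (1 - ρ ^ 2))⁻¹ *
      Real.exp (-(p.1 ^ 2 - 2 * ρ * p.1 * p.2 + p.2 ^ 2) / (2 * (1 - ρ ^ 2))))

open Real Set Filter

noncomputable section

instance biGauss.instSFinite (ρ : ℝ) : SFinite (biGauss ρ) := by
  unfold biGauss; infer_instance

namespace BiGaussAux


/-- The bivariate Gaussian density. -/
def dens (ρ : ℝ) (p : ℝ × ℝ) : ℝ :=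
  (2 * Real.pi * Real.sqrt (1 - ρ ^ 2))⁻¹ *
    Real.exp (-(p.1 ^ 2 - 2 * ρ * p.1 * p.2 + p.2 ^ 2) / (2 * (1 - ρ ^ 2)))

lemma continuous_dens (ρ : ℝ) : Continuous (dens ρ) := by unfold dens; fun_prop

lemma dens_nonneg (ρ : ℝ) (p : ℝ × ℝ) : 0 ≤ dens ρ p := by
  unfold dens; positivity

lemma angle_iff (ρ θ : ℝ) (h1 : -1 < ρ) (h2 : ρ < 1) (hθ : θ ∈ Ioo (-π) π) :
    (0 < Real.cos θ ∧ 0 < ρ * Real.cos θ + Real.sqrt (1 - ρ^2) * Real.sin θ) ↔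
      θ ∈ Ioo (Real.arccos ρ - π/2) (π/2) := by
  set φ := Real.arccos ρ with hφ
  have hφ1 : 0 < φ := Real.arccos_pos.mpr h2
  have hφ2 : φ < π := by
    rw [hφ, Real.arccos]
    have := Real.neg_pi_div_two_lt_arcsin.mpr h1
    linarith
  have key : ρ * Real.cos θ + Real.sqrt (1 - ρ^2) * Real.sin θ = Real.cos (θ - φ) := by
    rw [Real.cos_sub, Real.cos_arccos h1.le h2.le, Real.sin_arccos]; ring
  obtain ⟨hθ1', hθ2'⟩ := hθ
  constructor
  · rintro ⟨hc, hc2⟩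
    have hθ1 : -(π/2) < θ := by
      by_contra h; push_neg at h
      have : Real.cos θ ≤ 0 := by
        rw [← Real.cos_neg]
        exact Real.cos_nonpos_of_pi_div_two_le_of_le (by linarith) (by linarith)
      linarith
    have hθ2 : θ < π/2 := by
      by_contra h; push_neg at h
      have : Real.cos θ ≤ 0 :=
        Real.cos_nonpos_of_pi_div_two_le_of_le h (by linarith [Real.pi_pos])
      linarith
    refine ⟨?_, hθ2⟩
    by_contra h; push_neg at h
    have : Real.cos (θ - φ) ≤ 0 := by
      rw [← Real.cos_neg]
      exact Real.cos_nonpos_of_pi_div_two_le_of_le (by linarith) (by linarith)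
    rw [key] at hc2; linarith
  · rintro ⟨ha, hb⟩
    have h0 : 0 < Real.cos θ := Real.cos_pos_of_mem_Ioo ⟨by linarith, hb⟩
    refine ⟨h0, ?_⟩
    rw [key]
    exact Real.cos_pos_of_mem_Ioo ⟨by linarith, by linarith⟩

lemma radial : ∫ r in Ioi (0:ℝ), r * Real.exp (-(r^2/2)) = 1 := by
  have h := integral_Ioi_of_hasDerivAt_of_nonneg' (a := (0:ℝ)) (l := (0:ℝ))
    (g := fun r => -Real.exp (-(r^2/2))) (g' := fun r => r * Real.exp (-(r^2/2)))
    (fun x _ => by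
      have h1 := (((hasDerivAt_pow 2 x).div_const 2).neg.exp).neg
      refine HasDerivAt.congr_deriv h1 ?_
      simp
      ring)
    (fun x hx => mul_nonneg (le_of_lt hx) (Real.exp_nonneg _))
    ?_
  · simpa using h
  · have h2 : Tendsto (fun r : ℝ => -(r^2/2)) atTop atBot := by
      apply tendsto_neg_atBot_iff.mpr
      apply Tendsto.atTop_div_const (by norm_num)
      exact Filter.tendsto_pow_atTop (by norm_num)
    have := (Real.tendsto_exp_atBot.comp h2).neg
    simpa using this

lemma integrable_dens (ρ : ℝ) (h1 : -1 < ρ) (h2 : ρ < 1) : Integrable (dens ρ) := by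
  have hs2 : (0:ℝ) < 1 - ρ^2 := by nlinarith
  have hρ : |ρ| < 1 := abs_lt.mpr ⟨h1, h2⟩
  set a := (1 - |ρ|) / (2*(1-ρ^2)) with ha
  have ha0 : 0 < a := div_pos (by linarith) (by linarith)
  have hint : Integrable (fun p : ℝ×ℝ =>
      (2*π*Real.sqrt (1-ρ^2))⁻¹ * (Real.exp (-a*p.1^2) * Real.exp (-a*p.2^2))) :=
    ((integrable_exp_neg_mul_sq ha0).mul_prod (integrable_exp_neg_mul_sq ha0)).const_mul _
  apply hint.mono' (continuous_dens ρ).aestronglyMeasurable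
  filter_upwards with p
  rw [Real.norm_eq_abs, abs_of_nonneg (dens_nonneg ρ p)]
  unfold dens
  apply mul_le_mul_of_nonneg_left ?_ (by positivity)
  rw [← Real.exp_add]
  apply Real.exp_le_exp.mpr
  have key : (1-|ρ|)*(p.1^2+p.2^2) ≤ p.1^2 - 2*ρ*p.1*p.2 + p.2^2 := by
    rcases abs_cases ρ with h | h <;>
      nlinarith [sq_nonneg (p.1 - p.2), sq_nonneg (p.1+p.2)]
  have hrhs : -a*p.1^2 + -a*p.2^2 = -((1-|ρ|)*(p.1^2+p.2^2))/(2*(1-ρ^2)) := by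
    rw [ha]; ring
  rw [hrhs, div_le_div_iff_of_pos_right (by linarith)]
  exact neg_le_neg key

lemma integral_quadrant (ρ : ℝ) (h1 : -1 < ρ) (h2 : ρ < 1) :
    ∫ p in (Ioi (0:ℝ)) ×ˢ (Ioi (0:ℝ)), dens ρ p = 1/4 + Real.arcsin ρ / (2*π) := by
  have hs2 : (0:ℝ) < 1 - ρ^2 := by nlinarith
  set s : ℝ := Real.sqrt (1 - ρ^2) with hs_def
  have hs : 0 < s := Real.sqrt_pos.mpr hs2
  have hssq : s^2 = 1 - ρ^2 := Real.sq_sqrt hs2.le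
  set φ := Real.arccos ρ with hφ
  have hφ1 : 0 < φ := Real.arccos_pos.mpr h2
  have hφ2 : φ < π := by
    rw [hφ, Real.arccos]
    have := Real.neg_pi_div_two_lt_arcsin.mpr h1
    linarith
  have hπ := Real.pi_pos
  set T : (ℝ×ℝ) →ₗ[ℝ] (ℝ×ℝ) :=
    (LinearMap.fst ℝ ℝ ℝ).prod (ρ • LinearMap.fst ℝ ℝ ℝ + s • LinearMap.snd ℝ ℝ ℝ) with hT_def
  have hdet : LinearMap.det T = s := by
    rw [hT_def, ← LinearMap.det_toMatrix (Module.Basis.finTwoProd ℝ), Matrix.det_fin_two]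
    simp [LinearMap.toMatrix_apply]
  have hTapp : ∀ p : ℝ×ℝ, T p = (p.1, ρ*p.1 + s*p.2) := fun p => rfl
  set C : Set (ℝ×ℝ) := {p | 0 < p.1 ∧ 0 < ρ * p.1 + s * p.2} with hC
  have hCmeas : MeasurableSet C := by
    apply MeasurableSet.inter
    · exact measurableSet_lt measurable_const measurable_fst
    · exact measurableSet_lt measurable_const ((measurable_fst.const_mul ρ).add (measurable_snd.const_mul s))
  set F : (ℝ×ℝ) → ℝ := C.indicator (fun p => Real.exp (-((p.1^2 + p.2^2)/2))) with hF
  have hFmeas : Measurable F := (by fun_prop : Measurable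
    (fun p : ℝ×ℝ => Real.exp (-((p.1^2 + p.2^2)/2)))).indicator hCmeas
  have hQmeas : MeasurableSet ((Ioi (0:ℝ)) ×ˢ (Ioi (0:ℝ))) :=
    measurableSet_Ioi.prod measurableSet_Ioi
  set g := ((Ioi (0:ℝ)) ×ˢ (Ioi (0:ℝ))).indicator (dens ρ) with hg
  have hgmeas : Measurable g := (continuous_dens ρ).measurable.indicator hQmeas
  -- composition identity
  have comp : ∀ p : ℝ×ℝ, g (T p) = (2*π*s)⁻¹ * F p := by
    intro p
    rw [hTapp p, hg, hF]
    have hnum : (p.1:ℝ)^2 - 2*ρ*p.1*(ρ*p.1 + s*p.2) + (ρ*p.1+s*p.2)^2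
        = s^2*(p.1^2+p.2^2) := by
      linear_combination (-(p.1^2)) * hssq
    by_cases hp : p ∈ C
    · rw [Set.indicator_of_mem (by simpa [hC] using hp : (p.1, ρ*p.1+s*p.2) ∈
        (Ioi (0:ℝ)) ×ˢ (Ioi (0:ℝ))), Set.indicator_of_mem hp]
      unfold dens
      dsimp only
      rw [← hs_def]
      congr 1
      rw [hnum, ← hssq]
      field_simp
    · rw [Set.indicator_of_notMem (by simpa [hC] using hp : (p.1, ρ*p.1+s*p.2) ∉
        (Ioi (0:ℝ)) ×ˢ (Ioi (0:ℝ))), Set.indicator_of_notMem hp, mul_zero]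
  -- change of variables
  have hmap : Measure.map T volume = ENNReal.ofReal |(LinearMap.det T)⁻¹| • volume :=
    Measure.map_linearMap_addHaar_eq_smul_addHaar _ (by rw [hdet]; exact hs.ne')
  have h1' : ∫ p, g p ∂(Measure.map T volume) = ∫ p, g (T p) :=
    integral_map T.continuous_of_finiteDimensional.measurable.aemeasurable
      hgmeas.aestronglyMeasurable
  rw [hmap, integral_smul_measure, hdet,
    ENNReal.toReal_ofReal (abs_nonneg _), abs_of_pos (inv_pos.mpr hs)] at h1'
  -- polar coordinates for ∫ F
  have congr1 : ∀ p ∈ polarCoord.target,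
      p.1 • F (polarCoord.symm p) =
        (p.1 * Real.exp (-(p.1^2/2))) *
          (Ioo (φ - π/2) (π/2)).indicator (fun _ => (1:ℝ)) p.2 := by
    rintro ⟨r, θ⟩ hp
    rw [polarCoord_target] at hp
    obtain ⟨hr, hθ⟩ := hp
    have hr' : (0:ℝ) < r := hr
    have hsymm : polarCoord.symm (r, θ) = (r * Real.cos θ, r * Real.sin θ) := by
      simp [polarCoord_symm_apply]
    rw [hsymm, hF]
    have hmem : (r * Real.cos θ, r * Real.sin θ) ∈ C ↔ θ ∈ Ioo (φ - π/2) (π/2) := by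
      rw [← angle_iff ρ θ h1 h2 hθ, hC]
      show (0 < r * Real.cos θ ∧ 0 < ρ * (r * Real.cos θ) + s * (r * Real.sin θ)) ↔ _
      rw [show ρ * (r * Real.cos θ) + s * (r * Real.sin θ)
            = r * (ρ * Real.cos θ + s * Real.sin θ) by ring,
        mul_pos_iff_of_pos_left hr', mul_pos_iff_of_pos_left hr', ← hs_def]
    have hsq : (r * Real.cos θ)^2 + (r * Real.sin θ)^2 = r^2 := by
      linear_combination r^2 * (Real.sin_sq_add_cos_sq θ)
    by_cases hmem' : θ ∈ Ioo (φ - π/2) (π/2)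
    · rw [Set.indicator_of_mem (hmem.mpr hmem'), Set.indicator_of_mem hmem']
      dsimp only
      rw [hsq, smul_eq_mul, mul_one]
    · rw [Set.indicator_of_notMem (fun h => hmem' (hmem.mp h)),
        Set.indicator_of_notMem hmem', smul_zero, mul_zero]
  have hang : ∫ θ' in Ioo (-π) π,
      (Ioo (φ - π/2) (π/2)).indicator (fun _ => (1:ℝ)) θ' = π - φ := by
    rw [setIntegral_indicator measurableSet_Ioo, Set.Ioo_inter_Ioo,
      max_eq_right (by linarith), min_eq_right (by linarith), setIntegral_const,
      Real.volume_real_Ioo, smul_eq_mul, mul_one, max_eq_left (by linarith)]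
    ring
  have hFint : ∫ p, F p = π - φ := by
    rw [← integral_comp_polarCoord_symm F,
      setIntegral_congr_fun polarCoord.open_target.measurableSet congr1,
      polarCoord_target, Measure.volume_eq_prod,
      setIntegral_prod_mul (fun r : ℝ => r * Real.exp (-(r^2/2)))
        (fun θ' : ℝ => (Ioo (φ - π/2) (π/2)).indicator (fun _ => (1:ℝ)) θ')
        (Ioi 0) (Ioo (-π) π), radial, hang, one_mul]
  -- assemble
  have main : ∫ p, g p = s * ((2*π*s)⁻¹ * (π - φ)) := by
    have hgT : ∫ p, g (T p) = (2*π*s)⁻¹ * ∫ p, F p := by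
      simp only [comp]
      exact integral_const_mul _ _
    rw [← h1'] at hgT
    rw [smul_eq_mul] at hgT
    rw [hFint] at hgT
    field_simp at hgT ⊢
    linarith [hgT]
  rw [← integral_indicator hQmeas, ← hg, main, hφ, Real.arccos]
  field_simp
  ring

lemma measQpp : MeasurableSet {p : ℝ×ℝ | 0 < p.1 ∧ 0 < p.2} :=
  (measurableSet_lt measurable_const measurable_fst).inter
    (measurableSet_lt measurable_const measurable_snd)

lemma measQmm : MeasurableSet {p : ℝ×ℝ | p.1 < 0 ∧ p.2 < 0} :=
  (measurableSet_lt measurable_fst measurable_const).inter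
    (measurableSet_lt measurable_snd measurable_const)

lemma measQpm : MeasurableSet {p : ℝ×ℝ | 0 < p.1 ∧ p.2 < 0} :=
  (measurableSet_lt measurable_const measurable_fst).inter
    (measurableSet_lt measurable_snd measurable_const)

lemma measQmp : MeasurableSet {p : ℝ×ℝ | p.1 < 0 ∧ 0 < p.2} :=
  (measurableSet_lt measurable_fst measurable_const).inter
    (measurableSet_lt measurable_const measurable_snd)

lemma biGauss_apply (ρ : ℝ) {A : Set (ℝ×ℝ)} (hA : MeasurableSet A) :
    biGauss ρ A = ∫⁻ p in A, ENNReal.ofReal (dens ρ p) := by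
  rw [biGauss, withDensity_apply _ hA]
  rfl

lemma dens_negneg (ρ : ℝ) (p : ℝ × ℝ) : dens ρ (-p) = dens ρ p := by
  unfold dens
  simp only [Prod.fst_neg, Prod.snd_neg]
  ring_nf

lemma dens_negsnd (ρ : ℝ) (p : ℝ × ℝ) : dens ρ (p.1, -p.2) = dens (-ρ) p := by
  unfold dens
  simp only [neg_sq]
  ring_nf

lemma dens_negfst (ρ : ℝ) (p : ℝ × ℝ) : dens ρ (-p.1, p.2) = dens (-ρ) p := by
  unfold dens
  simp only [neg_sq]
  ring_nf

lemma biGauss_pp (ρ : ℝ) (h1 : -1 < ρ) (h2 : ρ < 1) :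
    biGauss ρ {p : ℝ×ℝ | 0 < p.1 ∧ 0 < p.2}
      = ENNReal.ofReal (1/4 + Real.arcsin ρ / (2*π)) := by
  have hset : {p : ℝ×ℝ | 0 < p.1 ∧ 0 < p.2} = (Ioi (0:ℝ)) ×ˢ (Ioi (0:ℝ)) := by
    ext p; simp [Set.mem_prod]
  rw [biGauss_apply ρ measQpp, hset,
    ← ofReal_integral_eq_lintegral_ofReal ((integrable_dens ρ h1 h2).integrableOn)
      (ae_of_all _ fun p => dens_nonneg ρ p),
    integral_quadrant ρ h1 h2]

lemma biGauss_mm (ρ : ℝ) (h1 : -1 < ρ) (h2 : ρ < 1) :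
    biGauss ρ {p : ℝ×ℝ | p.1 < 0 ∧ p.2 < 0}
      = ENNReal.ofReal (1/4 + Real.arcsin ρ / (2*π)) := by
  rw [biGauss_apply ρ measQmm]
  have mp : MeasurePreserving (fun p : ℝ×ℝ => -p) volume volume :=
    Measure.measurePreserving_neg volume
  have emb : MeasurableEmbedding (fun p : ℝ×ℝ => -p) :=
    (Homeomorph.neg (ℝ×ℝ)).measurableEmbedding
  have key := mp.setLIntegral_comp_preimage_emb emb
    (fun p => ENNReal.ofReal (dens ρ p)) {p : ℝ×ℝ | p.1 < 0 ∧ p.2 < 0}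
  have hpre : (fun p : ℝ×ℝ => -p) ⁻¹' {p : ℝ×ℝ | p.1 < 0 ∧ p.2 < 0}
      = {p : ℝ×ℝ | 0 < p.1 ∧ 0 < p.2} := by
    ext p
    simp [Prod.fst_neg, Prod.snd_neg, neg_lt_zero]
  rw [hpre] at key
  simp only [dens_negneg] at key
  rw [← key, ← biGauss_apply ρ measQpp, biGauss_pp ρ h1 h2]

lemma biGauss_pm (ρ : ℝ) (h1 : -1 < ρ) (h2 : ρ < 1) :
    biGauss ρ {p : ℝ×ℝ | 0 < p.1 ∧ p.2 < 0}
      = ENNReal.ofReal (1/4 - Real.arcsin ρ / (2*π)) := by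
  rw [biGauss_apply ρ measQpm]
  have mp : MeasurePreserving (fun p : ℝ×ℝ => (p.1, -p.2)) volume volume :=
    (MeasurePreserving.id (volume : Measure ℝ)).prod
      (Measure.measurePreserving_neg (volume : Measure ℝ))
  have emb : MeasurableEmbedding (fun p : ℝ×ℝ => (p.1, -p.2)) :=
    ((Homeomorph.refl ℝ).prodCongr (Homeomorph.neg ℝ)).measurableEmbedding
  have key := mp.setLIntegral_comp_preimage_emb emb
    (fun p => ENNReal.ofReal (dens ρ p)) {p : ℝ×ℝ | 0 < p.1 ∧ p.2 < 0}
  have hpre : (fun p : ℝ×ℝ => (p.1, -p.2)) ⁻¹' {p : ℝ×ℝ | 0 < p.1 ∧ p.2 < 0}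
      = {p : ℝ×ℝ | 0 < p.1 ∧ 0 < p.2} := by
    ext p
    simp [neg_lt_zero]
  rw [hpre] at key
  simp only [dens_negsnd] at key
  rw [← key, ← biGauss_apply (-ρ) measQpp, biGauss_pp (-ρ) (by linarith) (by linarith),
    Real.arcsin_neg]
  ring_nf

lemma biGauss_mp (ρ : ℝ) (h1 : -1 < ρ) (h2 : ρ < 1) :
    biGauss ρ {p : ℝ×ℝ | p.1 < 0 ∧ 0 < p.2}
      = ENNReal.ofReal (1/4 - Real.arcsin ρ / (2*π)) := by
  rw [biGauss_apply ρ measQmp]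
  have mp : MeasurePreserving (fun p : ℝ×ℝ => (-p.1, p.2)) volume volume :=
    (Measure.measurePreserving_neg (volume : Measure ℝ)).prod
      (MeasurePreserving.id (volume : Measure ℝ))
  have emb : MeasurableEmbedding (fun p : ℝ×ℝ => (-p.1, p.2)) :=
    ((Homeomorph.neg ℝ).prodCongr (Homeomorph.refl ℝ)).measurableEmbedding
  have key := mp.setLIntegral_comp_preimage_emb emb
    (fun p => ENNReal.ofReal (dens ρ p)) {p : ℝ×ℝ | p.1 < 0 ∧ 0 < p.2}
  have hpre : (fun p : ℝ×ℝ => (-p.1, p.2)) ⁻¹' {p : ℝ×ℝ | p.1 < 0 ∧ 0 < p.2}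
      = {p : ℝ×ℝ | 0 < p.1 ∧ 0 < p.2} := by
    ext p
    simp [neg_lt_zero]
  rw [hpre] at key
  simp only [dens_negfst] at key
  rw [← key, ← biGauss_apply (-ρ) measQpp, biGauss_pp (-ρ) (by linarith) (by linarith),
    Real.arcsin_neg]
  ring_nf

end BiGaussAux

end

open BiGaussAux

/-- For two independent copies `(X, Y)`, `(X′, Y′)` of a centered bivariate Gaussian vector
with unit variances and correlation `ρ ∈ (−1, 1)`,
`P(X·X′ > 0, Y·Y′ > 0) = 1/4 + arcsin²(ρ)/π²`. -/
theorem stmt18 (ρ : ℝ) (hρ₁ : -1 < ρ) (hρ₂ : ρ < 1) :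
    ((biGauss ρ).prod (biGauss ρ))
        {q : (ℝ × ℝ) × (ℝ × ℝ) | 0 < q.1.1 * q.2.1 ∧ 0 < q.1.2 * q.2.2} =
      ENNReal.ofReal (1 / 4 + Real.arcsin ρ ^ 2 / Real.pi ^ 2) := by
  have hE : {q : (ℝ × ℝ) × (ℝ × ℝ) | 0 < q.1.1 * q.2.1 ∧ 0 < q.1.2 * q.2.2}
      = ({p : ℝ×ℝ | 0 < p.1 ∧ 0 < p.2} ×ˢ {p : ℝ×ℝ | 0 < p.1 ∧ 0 < p.2})
        ∪ (({p : ℝ×ℝ | 0 < p.1 ∧ p.2 < 0} ×ˢ {p : ℝ×ℝ | 0 < p.1 ∧ p.2 < 0})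
        ∪ (({p : ℝ×ℝ | p.1 < 0 ∧ 0 < p.2} ×ˢ {p : ℝ×ℝ | p.1 < 0 ∧ 0 < p.2})
        ∪ ({p : ℝ×ℝ | p.1 < 0 ∧ p.2 < 0} ×ˢ {p : ℝ×ℝ | p.1 < 0 ∧ p.2 < 0}))) := by
    ext ⟨⟨x, y⟩, ⟨x', y'⟩⟩
    simp only [Set.mem_setOf_eq, Set.mem_union, Set.mem_prod, mul_pos_iff]
    constructor
    · rintro ⟨(⟨hx, hx'⟩ | ⟨hx, hx'⟩), (⟨hy, hy'⟩ | ⟨hy, hy'⟩)⟩ <;> tauto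
    · rintro (⟨⟨a, b⟩, c, d⟩ | ⟨⟨a, b⟩, c, d⟩ | ⟨⟨a, b⟩, c, d⟩ | ⟨⟨a, b⟩, c, d⟩) <;> tauto
  have d_pp_pm : Disjoint {p : ℝ×ℝ | 0 < p.1 ∧ 0 < p.2} {p : ℝ×ℝ | 0 < p.1 ∧ p.2 < 0} :=
    Set.disjoint_left.mpr fun p hp hq => absurd hp.2 (not_lt.mpr hq.2.le)
  have d_pp_mp : Disjoint {p : ℝ×ℝ | 0 < p.1 ∧ 0 < p.2} {p : ℝ×ℝ | p.1 < 0 ∧ 0 < p.2} :=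
    Set.disjoint_left.mpr fun p hp hq => absurd hp.1 (not_lt.mpr hq.1.le)
  have d_pp_mm : Disjoint {p : ℝ×ℝ | 0 < p.1 ∧ 0 < p.2} {p : ℝ×ℝ | p.1 < 0 ∧ p.2 < 0} :=
    Set.disjoint_left.mpr fun p hp hq => absurd hp.1 (not_lt.mpr hq.1.le)
  have d_pm_mp : Disjoint {p : ℝ×ℝ | 0 < p.1 ∧ p.2 < 0} {p : ℝ×ℝ | p.1 < 0 ∧ 0 < p.2} :=
    Set.disjoint_left.mpr fun p hp hq => absurd hp.1 (not_lt.mpr hq.1.le)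
  have d_pm_mm : Disjoint {p : ℝ×ℝ | 0 < p.1 ∧ p.2 < 0} {p : ℝ×ℝ | p.1 < 0 ∧ p.2 < 0} :=
    Set.disjoint_left.mpr fun p hp hq => absurd hp.1 (not_lt.mpr hq.1.le)
  have d_mp_mm : Disjoint {p : ℝ×ℝ | p.1 < 0 ∧ 0 < p.2} {p : ℝ×ℝ | p.1 < 0 ∧ p.2 < 0} :=
    Set.disjoint_left.mpr fun p hp hq => absurd hp.2 (not_lt.mpr hq.2.le)
  rw [hE, measure_union
      ((Set.disjoint_prod.mpr (Or.inl d_pp_pm)).union_right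
        ((Set.disjoint_prod.mpr (Or.inl d_pp_mp)).union_right
          (Set.disjoint_prod.mpr (Or.inl d_pp_mm))))
      ((measQpm.prod measQpm).union ((measQmp.prod measQmp).union (measQmm.prod measQmm))),
    measure_union
      ((Set.disjoint_prod.mpr (Or.inl d_pm_mp)).union_right
        (Set.disjoint_prod.mpr (Or.inl d_pm_mm)))
      ((measQmp.prod measQmp).union (measQmm.prod measQmm)),
    measure_union (Set.disjoint_prod.mpr (Or.inl d_mp_mm)) (measQmm.prod measQmm),
    Measure.prod_prod, Measure.prod_prod, Measure.prod_prod, Measure.prod_prod,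
    biGauss_pp ρ hρ₁ hρ₂, biGauss_pm ρ hρ₁ hρ₂, biGauss_mp ρ hρ₁ hρ₂, biGauss_mm ρ hρ₁ hρ₂]
  have ha1 := Real.neg_pi_div_two_le_arcsin ρ
  have ha2 := Real.arcsin_le_pi_div_two ρ
  have hπ := Real.pi_pos
  have hplus : 0 ≤ 1/4 + Real.arcsin ρ / (2*π) := by
    have : -(1/4 : ℝ) ≤ Real.arcsin ρ / (2*π) := by
      rw [le_div_iff₀ (by positivity)]; linarith
    linarith
  have hminus : 0 ≤ 1/4 - Real.arcsin ρ / (2*π) := by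
    have : Real.arcsin ρ / (2*π) ≤ 1/4 := by
      rw [div_le_iff₀ (by positivity)]; linarith
    linarith
  rw [← ENNReal.ofReal_mul hplus, ← ENNReal.ofReal_mul hminus,
    ← ENNReal.ofReal_add (mul_nonneg hminus hminus) (mul_nonneg hplus hplus),
    ← ENNReal.ofReal_add (mul_nonneg hminus hminus)
      (add_nonneg (mul_nonneg hminus hminus) (mul_nonneg hplus hplus)),
    ← ENNReal.ofReal_add (mul_nonneg hplus hplus)
      (add_nonneg (mul_nonneg hminus hminus)
        (add_nonneg (mul_nonneg hminus hminus) (mul_nonneg hplus hplus)))]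
  congr 1
  field_simp
  ring
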